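/- In a unital C*-algebra A, the closed unit ball of A is the closed convex hull of the set of unitary elements. -/

import Mathlib

section RussoDye

variable {A : Type*} [CStarAlgebra A] [NormOneClass A]

lemma rd_nontrivial : Nontrivial A := by
  refine ⟨⟨0, 1, fun h => ?_⟩⟩
  have h1 : ‖(1 : A)‖ = 1 := norm_one
  rw [← h, norm_zero] at h1
  norm_num at h1

/-- A selfadjoint contraction is a mean of two unitaries. -/
lemma rd_sa_mean {x : A} (hx : IsSelfAdjoint x) (hx1 : ‖x‖ ≤ 1) :
    ∃ u ∈ unitary A, ∃ v ∈ unitary A,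
      x = (1/2 : ℝ) • u + (1/2 : ℝ) • v := by
  have hnormal : IsStarNormal x := hx.isStarNormal
  set f : ℂ → ℂ := fun z => (z.re : ℂ) + (Real.sqrt (1 - z.re ^ 2) : ℂ) * Complex.I with hf
  have hcont : Continuous f := by fun_prop
  have hspec : ∀ z ∈ spectrum ℂ x, z = (z.re : ℂ) ∧ z.re ^ 2 ≤ 1 := by
    intro z hz
    refine ⟨hx.mem_spectrum_eq_re hz, ?_⟩
    have h2 : ‖z‖ ≤ ‖x‖ := spectrum.norm_le_norm_of_mem hz
    have h3 : |z.re| ≤ 1 := le_trans (le_trans (Complex.abs_re_le_norm z) h2) hx1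
    calc z.re ^ 2 = |z.re| ^ 2 := (sq_abs _).symm
    _ ≤ 1 := by nlinarith [abs_nonneg z.re]
  have huu : cfc f x ∈ unitary A := by
    rw [cfc_unitary_iff f x hnormal hcont.continuousOn]
    intro z hz
    obtain ⟨h1, h2⟩ := hspec z hz
    have hs : ((Real.sqrt (1 - z.re ^ 2) : ℝ) : ℂ) ^ 2 = 1 - (z.re : ℂ) ^ 2 := by
      rw [← Complex.ofReal_pow, Real.sq_sqrt (by linarith)]
      push_cast; ring
    simp only [f, Complex.star_def, map_add, map_mul, Complex.conj_ofReal, Complex.conj_I]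
    linear_combination hs - ((Real.sqrt (1 - z.re ^ 2) : ℂ))^2 * Complex.I_sq
  refine ⟨cfc f x, huu, star (cfc f x), Unitary.star_mem huu, ?_⟩
  have key : cfc f x + star (cfc f x) = (2 : ℂ) • x := by
    rw [← cfc_star f x, ← cfc_add x f _ hcont.continuousOn (by fun_prop)]
    have : cfc (fun z => f z + star (f z)) x = cfc (fun z : ℂ => (2 : ℂ) • z) x := by
      apply cfc_congr
      intro z hz
      obtain ⟨h1, -⟩ := hspec z hz
      simp only [f, Complex.star_def, map_add, map_mul, Complex.conj_ofReal, Complex.conj_I,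
        Complex.ofReal_re, smul_eq_mul]
      rw [← h1]
      ring
    rw [this, cfc_smul_id (2 : ℂ) x]
  rw [← smul_add, key]
  module

/-- An invertible contraction is a mean of two unitaries. -/
lemma rd_isUnit_mean {a : A} (ha : IsUnit a) (ha1 : ‖a‖ ≤ 1) :
    ∃ u ∈ unitary A, ∃ v ∈ unitary A,
      a = (1/2 : ℝ) • u + (1/2 : ℝ) • v := by
  have hh_sa : IsSelfAdjoint (star a * a) := IsSelfAdjoint.star_mul_self a
  have hnn := spectrum_star_mul_self_nonneg (b := a)
  have hh_unit : IsUnit (star a * a) := ha.star.mul ha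
  set m := cfc Real.sqrt (star a * a) with hm
  have hmsa : IsSelfAdjoint m := cfc_predicate _ _
  have hmm : m * m = star a * a := by
    rw [hm, ← cfc_mul Real.sqrt Real.sqrt (star a * a)]
    have : cfc (fun t => Real.sqrt t * Real.sqrt t) (star a * a)
        = cfc (id : ℝ → ℝ) (star a * a) := by
      apply cfc_congr
      intro t ht
      simp [Real.mul_self_sqrt (hnn t ht)]
    rw [this, cfc_id ℝ (star a * a)]
  have hm_unit : IsUnit m := by
    rw [hm]
    rw [isUnit_cfc_iff Real.sqrt (star a * a)]
    intro t ht
    have ht0 : 0 ≤ t := hnn t ht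
    have htne : t ≠ 0 := by
      rintro rfl
      exact spectrum.zero_notMem ℝ hh_unit ht
    exact (Real.sqrt_ne_zero'.mpr (lt_of_le_of_ne ht0 (Ne.symm htne)))
  have hmnorm : ‖m‖ ≤ 1 := by
    have h1 : ‖m‖ * ‖m‖ = ‖star a * a‖ := by
      rw [← hmm]
      nth_rewrite 3 [← hmsa.star_eq]
      exact (CStarRing.norm_star_mul_self (x := m)).symm
    have h2 : ‖star a * a‖ = ‖a‖ * ‖a‖ := CStarRing.norm_star_mul_self (x := a)
    nlinarith [norm_nonneg m, norm_nonneg a]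
  obtain ⟨M, hM⟩ := hm_unit
  set n := ((M⁻¹ : Aˣ) : A) with hn
  have hmn : m * n = 1 := by rw [hn, ← hM]; exact M.mul_inv
  have hnm : n * m = 1 := by rw [hn, ← hM]; exact M.inv_mul
  have hstar_n : star n = n := by
    have h1 : star m * star n = 1 := by rw [← star_mul, hnm, star_one]
    have h2 : m * star n = 1 := by rwa [hmsa.star_eq] at h1
    calc star n = (n * m) * star n := by rw [hnm, one_mul]
    _ = n * (m * star n) := by rw [mul_assoc]
    _ = n := by rw [h2, mul_one]
  set w := a * n with hw
  have hw_unit : IsUnit w := ha.mul (M⁻¹).isUnit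
  have hws : star w * w = 1 := by
    calc star w * w = n * ((star a * a) * n) := by
          rw [hw, star_mul, hstar_n, mul_assoc, mul_assoc]
    _ = n * ((m * m) * n) := by rw [hmm]
    _ = (n * m) * (m * n) := by noncomm_ring
    _ = 1 := by rw [hmn, hnm, one_mul]
  have hwu : w ∈ unitary A := by
    obtain ⟨W, hW⟩ := hw_unit
    have hwin : w * ((W⁻¹ : Aˣ) : A) = 1 := by rw [← hW]; exact W.mul_inv
    have hsw : star w = ((W⁻¹ : Aˣ) : A) := by
      calc star w = star w * (w * ((W⁻¹ : Aˣ) : A)) := by rw [hwin, mul_one]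
      _ = (star w * w) * ((W⁻¹ : Aˣ) : A) := (mul_assoc _ _ _).symm
      _ = ((W⁻¹ : Aˣ) : A) := by rw [hws, one_mul]
    refine Unitary.mem_iff.mpr ⟨hws, ?_⟩
    rw [hsw, hwin]
  obtain ⟨u, hu, v, hv, huv⟩ := rd_sa_mean hmsa hmnorm
  refine ⟨w * u, mul_mem hwu hu, w * v, mul_mem hwu hv, ?_⟩
  have haw : a = w * m := by
    rw [hw, mul_assoc, hnm, mul_one]
  rw [haw, huv, mul_add, mul_smul_comm, mul_smul_comm]

/-- Kadison–Pedersen: midpoint of a strict contraction and a unitary is in the hull. -/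
lemma rd_midpoint_mem {a : A} (ha : ‖a‖ < 1) {u : A} (hu : u ∈ unitary A) :
    (1/2 : ℝ) • a + (1/2 : ℝ) • u ∈ convexHull ℝ (unitary A : Set A) := by
  have hu1 : star u * u = 1 := (Unitary.mem_iff.mp hu).1
  haveI : Nontrivial A := rd_nontrivial
  have hunorm : ‖u‖ = 1 := CStarRing.norm_of_mem_unitary hu
  have h1 : IsUnit (a * star u + 1) := by
    have : ‖-(a * star u)‖ < 1 := by
      rw [norm_neg]
      calc ‖a * star u‖ ≤ ‖a‖ * ‖star u‖ := norm_mul_le _ _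
      _ = ‖a‖ := by rw [norm_star, hunorm, mul_one]
      _ < 1 := ha
    have := isUnit_one_sub_of_norm_lt_one this
    rwa [sub_neg_eq_add, add_comm] at this
  have huunit : IsUnit u := ⟨Unitary.toUnits ⟨u, hu⟩, rfl⟩
  have hsum_unit : IsUnit (a + u) := by
    have : (a * star u + 1) * u = a + u := by
      rw [add_mul, one_mul, mul_assoc, hu1, mul_one]
    rw [← this]
    exact h1.mul huunit
  set b := (1/2 : ℝ) • (a + u) with hb
  have hb_unit : IsUnit b := by
    obtain ⟨C, hC⟩ := hsum_unit
    refine ⟨⟨b, (2 : ℝ) • ((C⁻¹ : Aˣ) : A), ?_, ?_⟩, rfl⟩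
    · rw [hb, smul_mul_smul_comm, ← hC, C.mul_inv]
      norm_num
    · rw [hb, smul_mul_smul_comm, ← hC, C.inv_mul]
      norm_num
  have hb_norm : ‖b‖ ≤ 1 := by
    rw [hb, norm_smul]
    have h4 : ‖a + u‖ ≤ ‖a‖ + ‖u‖ := norm_add_le _ _
    rw [hunorm] at h4
    have h5 : ‖(1/2 : ℝ)‖ = 1/2 := by rw [Real.norm_eq_abs]; norm_num
    rw [h5]
    nlinarith
  obtain ⟨u₁, hu₁, u₂, hu₂, hbe⟩ := rd_isUnit_mean hb_unit hb_norm
  have : (1/2 : ℝ) • a + (1/2 : ℝ) • u = b := by rw [hb, smul_add]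
  rw [this, hbe]
  exact convex_convexHull ℝ _
    (subset_convexHull ℝ _ hu₁) (subset_convexHull ℝ _ hu₂)
    (by norm_num) (by norm_num) (by norm_num)

lemma rd_lt_one_mem_closure {a : A} (ha : ‖a‖ < 1) :
    a ∈ closure (convexHull ℝ (unitary A : Set A)) := by
  have key : ∀ x ∈ convexHull ℝ (unitary A : Set A),
      (1/2 : ℝ) • a + (1/2 : ℝ) • x ∈ convexHull ℝ (unitary A : Set A) := by
    intro x hx
    have hS : Convex ℝ {y : A | (1/2 : ℝ) • a + (1/2 : ℝ) • y
        ∈ convexHull ℝ (unitary A : Set A)} := by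
      intro y hy z hz s t hs ht hst
      simp only [Set.mem_setOf_eq] at hy hz ⊢
      have : (1/2 : ℝ) • a + (1/2 : ℝ) • (s • y + t • z)
          = s • ((1/2 : ℝ) • a + (1/2 : ℝ) • y) + t • ((1/2 : ℝ) • a + (1/2 : ℝ) • z) := by
        rw [show s • ((1/2 : ℝ) • a + (1/2 : ℝ) • y) + t • ((1/2 : ℝ) • a + (1/2 : ℝ) • z)
            = ((s + t) * (1/2)) • a + (1/2 : ℝ) • (s • y + t • z) by module, hst]
        module
      rw [this]
      exact convex_convexHull ℝ _ hy hz hs ht hst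
    have : (unitary A : Set A) ⊆ {y : A | (1/2 : ℝ) • a + (1/2 : ℝ) • y
        ∈ convexHull ℝ (unitary A : Set A)} := fun u hu => rd_midpoint_mem ha hu
    exact convexHull_min this hS hx
  set T : A → A := fun y => (1/2 : ℝ) • a + (1/2 : ℝ) • y with hT
  set x : ℕ → A := fun n => T^[n] 1 with hx
  have hxsucc : ∀ n, x (n + 1) = (1/2 : ℝ) • a + (1/2 : ℝ) • x n := by
    intro n
    show T^[n + 1] 1 = _
    rw [Function.iterate_succ_apply']
  have hmem : ∀ n, x n ∈ convexHull ℝ (unitary A : Set A) := by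
    intro n
    induction n with
    | zero => exact subset_convexHull ℝ _ (one_mem (unitary A))
    | succ n ih =>
      rw [hxsucc]
      exact key _ ih
  have hdist : ∀ n, ‖x n - a‖ ≤ (1/2 : ℝ) ^ n * ‖(1 : A) - a‖ := by
    intro n
    induction n with
    | zero => simp [hx]
    | succ n ih =>
      have : x (n + 1) - a = (1/2 : ℝ) • (x n - a) := by
        rw [hxsucc]
        module
      rw [this, norm_smul]
      rw [show ‖(1/2 : ℝ)‖ = 1/2 by rw [Real.norm_eq_abs]; norm_num]
      calc (1/2 : ℝ) * ‖x n - a‖ ≤ (1/2 : ℝ) * ((1/2 : ℝ) ^ n * ‖(1 : A) - a‖) := by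
            nlinarith [norm_nonneg (x n - a)]
      _ = (1/2 : ℝ) ^ (n + 1) * ‖(1 : A) - a‖ := by ring
  have htend : Filter.Tendsto x Filter.atTop (nhds a) := by
    rw [tendsto_iff_norm_sub_tendsto_zero]
    apply squeeze_zero (fun n => norm_nonneg _) hdist
    rw [show (0:ℝ) = 0 * ‖(1 : A) - a‖ by ring]
    exact (tendsto_pow_atTop_nhds_zero_of_lt_one (by norm_num) (by norm_num)).mul_const _
  exact mem_closure_of_tendsto htend (Filter.Eventually.of_forall hmem)

end RussoDye

theorem stmt15 (A : Type*) [NormedRing A] [StarRing A] [CStarRing A] [CompleteSpace A]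
    [NormedAlgebra ℂ A] [StarModule ℂ A] [NormOneClass A] :
    Metric.closedBall (0 : A) 1 =
      closure (convexHull ℝ ((unitary A : Set A))) := by
  letI : CStarAlgebra A := {}
  haveI : Nontrivial A := rd_nontrivial
  ext a
  rw [Metric.mem_closedBall, dist_zero_right]
  constructor
  · intro ha
    set y : ℕ → A := fun n => (1 - 1/(n+1) : ℝ) • a with hy
    have hmem : ∀ n, y n ∈ closure (convexHull ℝ (unitary A : Set A)) := by
      intro n
      apply rd_lt_one_mem_closure
      rw [hy, norm_smul]
      have h1 : (0:ℝ) ≤ 1 - 1/(n+1) := by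
        have h0 : (0:ℝ) ≤ (n:ℝ) := Nat.cast_nonneg n
        have : 1/((n:ℝ)+1) ≤ 1 := by
          rw [div_le_one (by positivity)]
          linarith
        linarith
      have h2 : (1 - 1/((n:ℝ)+1)) < 1 := by
        have : (0:ℝ) < 1/((n:ℝ)+1) := by positivity
        linarith
      simp only [Real.norm_eq_abs, abs_of_nonneg h1]
      nlinarith [norm_nonneg a]
    have htend : Filter.Tendsto y Filter.atTop (nhds a) := by
      have h1 : Filter.Tendsto (fun n : ℕ => (1 - 1/(n+1) : ℝ)) Filter.atTop (nhds 1) := by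
        have : Filter.Tendsto (fun n : ℕ => 1 / ((n : ℝ) + 1)) Filter.atTop (nhds 0) :=
          tendsto_one_div_add_atTop_nhds_zero_nat
        have h2 : Filter.Tendsto (fun n : ℕ => (1 : ℝ) - 1/(n+1)) Filter.atTop (nhds (1 - 0)) :=
          Filter.Tendsto.sub tendsto_const_nhds this
        rw [sub_zero] at h2
        exact h2
      have h3 := h1.smul_const a
      rw [one_smul] at h3
      exact h3
    have := mem_closure_of_tendsto htend (Filter.Eventually.of_forall hmem)
    rwa [closure_closure] at this
  · intro ha
    have h1 : (unitary A : Set A) ⊆ {y : A | ‖y‖ ≤ 1} := by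
      intro u hu
      simp only [Set.mem_setOf_eq]
      rw [CStarRing.norm_of_mem_unitary hu]
    have h2 : convexHull ℝ (unitary A : Set A) ⊆ {y : A | ‖y‖ ≤ 1} := by
      apply convexHull_min h1
      have : {y : A | ‖y‖ ≤ 1} = Metric.closedBall (0 : A) 1 := by
        ext y; simp [Metric.mem_closedBall, dist_zero_right]
      rw [this]
      exact convex_closedBall _ _
    have h3 : closure (convexHull ℝ (unitary A : Set A)) ⊆ {y : A | ‖y‖ ≤ 1} := by
      apply closure_minimal h2
      have : {y : A | ‖y‖ ≤ 1} = Metric.closedBall (0 : A) 1 := by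
        ext y; simp [Metric.mem_closedBall, dist_zero_right]
      rw [this]
      exact Metric.isClosed_closedBall
    exact h3 ha
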